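/- arXiv:2206.04368 — 2 statements merged into one kernel-verified Lean document; each statement's English description precedes it below -/
import Mathlib

section
/- Let H be a real Hilbert space, T > 0, and let A : H → H be continuous and monotone, i.e. ⟨A x − A y, x − y⟩ ≥ 0 for all x, y ∈ H. For each n let u_n : [0,T] → H be continuously differentiable with u_n'(t) + A(u_n(t)) = f_n(t) for all t ∈ [0,T] and u_n(0) = V_n, where f_n : [0,T] → H is continuous and V_n ∈ H. Let u₀ : [0,T] → H be continuously differentiable, f : [0,T] → H continuous, and V ∈ H. Assume: (a) sup_n sup_{t ∈ [0,T]} ‖u_n(t)‖ < ∞; (b) for every t ∈ [0,T] and every v ∈ H, ⟨u_n(t), v⟩ → ⟨u₀(t), v⟩; (c) for every continuous φ : [0,T] → H, ∫₀ᵀ ⟨u_n'(τ), φ(τ)⟩ dτ → ∫₀ᵀ ⟨u₀'(τ), φ(τ)⟩ dτ; (d) ∫₀ᵀ ‖f_n(τ) − f(τ)‖² dτ → 0; (e) ‖V_n − V‖ → 0. Then for every t ∈ [0,T], ‖u_n(t)‖ → ‖u₀(t)‖, and consequently u_n(t) → u₀(t) strongly in H. (Strong convergence of the approximating solutions in the model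 case of the Minty monotonicity method, Appendix A.) -/
open MeasureTheory Filter RealInnerProductSpace

set_option maxHeartbeats 1600000 in
/-- Strong convergence of the approximating solutions in the model case of the
Minty monotonicity method: under uniform boundedness, weak convergence of
`u_n(t)` and of the derivatives (tested against continuous functions), strong
convergence of the data `f_n → f` in `L²` and `V_n → V` in `H`, the norms
converge, `‖u_n(t)‖ → ‖u₀(t)‖`, and consequently `u_n(t) → u₀(t)` strongly. -/
theorem minty_strong_convergence
    {H : Type*} [NormedAddCommGroup H] [InnerProductSpace ℝ H] [CompleteSpace H]
    (T : ℝ) (hT : 0 < T) (A : H → H)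
    (hAcont : Continuous A)
    (hAmono : ∀ x y : H, 0 ≤ ⟪A x - A y, x - y⟫)
    (u : ℕ → ℝ → H) (u' : ℕ → ℝ → H) (f : ℕ → ℝ → H) (V : ℕ → H)
    (u₀ u₀' : ℝ → H) (f₀ : ℝ → H) (V₀ : H)
    (hderiv : ∀ n, ∀ t ∈ Set.Icc (0 : ℝ) T, HasDerivAt (u n) (u' n t) t)
    (hcont : ∀ n, ContinuousOn (u' n) (Set.Icc 0 T))
    (hfcont : ∀ n, ContinuousOn (f n) (Set.Icc 0 T))
    (heq : ∀ n, ∀ t ∈ Set.Icc (0 : ℝ) T, u' n t + A (u n t) = f n t)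
    (hinit : ∀ n, u n 0 = V n)
    (hderiv₀ : ∀ t ∈ Set.Icc (0 : ℝ) T, HasDerivAt u₀ (u₀' t) t)
    (hcont₀ : ContinuousOn u₀' (Set.Icc 0 T))
    (hf₀cont : ContinuousOn f₀ (Set.Icc 0 T))
    -- (a) uniform boundedness
    (hbound : ∃ C : ℝ, ∀ n, ∀ t ∈ Set.Icc (0 : ℝ) T, ‖u n t‖ ≤ C)
    -- (b) pointwise-in-time weak convergence
    (hweak : ∀ t ∈ Set.Icc (0 : ℝ) T, ∀ v : H,
      Tendsto (fun n => ⟪u n t, v⟫) atTop (nhds ⟪u₀ t, v⟫))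
    -- (c) weak convergence of derivatives against continuous test functions
    (hweak' : ∀ φ : ℝ → H, Continuous φ →
      Tendsto (fun n => ∫ τ in (0 : ℝ)..T, ⟪u' n τ, φ τ⟫) atTop
        (nhds (∫ τ in (0 : ℝ)..T, ⟪u₀' τ, φ τ⟫)))
    -- (d) strong L² convergence of the right-hand sides
    (hfconv : Tendsto (fun n => ∫ τ in (0 : ℝ)..T, ‖f n τ - f₀ τ‖ ^ 2)
      atTop (nhds 0))
    -- (e) strong convergence of the initial data
    (hVconv : Tendsto (fun n => ‖V n - V₀‖) atTop (nhds 0)) :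
    ∀ t ∈ Set.Icc (0 : ℝ) T,
      Tendsto (fun n => ‖u n t‖) atTop (nhds ‖u₀ t‖) ∧
        Tendsto (fun n => ‖u n t - u₀ t‖) atTop (nhds 0) := by
  obtain ⟨C₀, hC₀⟩ := hbound
  set C : ℝ := max C₀ 0 with hCdef
  have hC0 : (0:ℝ) ≤ C := le_max_right _ _
  have hCb : ∀ n, ∀ s ∈ Set.Icc (0:ℝ) T, ‖u n s‖ ≤ C :=
    fun n s hs => (hC₀ n s hs).trans (le_max_left _ _)
  -- continuity of u n on Icc 0 T
  have hucont : ∀ n, ContinuousOn (u n) (Set.Icc (0:ℝ) T) :=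
    fun n => fun s hs => ((hderiv n s hs).continuousAt).continuousWithinAt
  intro t ht
  obtain ⟨ht0, htT⟩ := ht
  have hIcc_sub : Set.Icc (0:ℝ) t ⊆ Set.Icc (0:ℝ) T :=
    Set.Icc_subset_Icc le_rfl htT
  have huIcc : Set.uIcc (0:ℝ) t = Set.Icc 0 t := Set.uIcc_of_le ht0
  -- integrability of the squared data differences on [0,T]
  have hfint : ∀ n, IntervalIntegrable (fun τ => ‖f n τ - f₀ τ‖^2) volume 0 T := by
    intro n
    apply ContinuousOn.intervalIntegrable
    rw [Set.uIcc_of_le hT.le]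
    exact (((hfcont n).sub hf₀cont).norm).pow 2
  have hfnm_int : ∀ n m, IntervalIntegrable (fun τ => ‖f n τ - f m τ‖^2) volume 0 T := by
    intro n m
    apply ContinuousOn.intervalIntegrable
    rw [Set.uIcc_of_le hT.le]
    exact (((hfcont n).sub (hfcont m)).norm).pow 2
  -- key energy estimate between two approximate solutions
  have key : ∀ ε > (0:ℝ), ∀ n m : ℕ,
      ‖u n t - u m t‖^2 ≤ ‖V n - V m‖^2 + ε
        + (4*C^2*T/ε) * ∫ τ in (0:ℝ)..T, ‖f n τ - f m τ‖^2 := by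
    intro ε hε n m
    set K : ℝ := 4*C^2*T/ε with hK
    have hK0 : 0 ≤ K := by positivity
    set w : ℝ → H := fun τ => u n τ - u m τ with hw
    set g' : ℝ → ℝ := fun τ => 2 * ⟪u' n τ - u' m τ, w τ⟫ with hg'
    have hwd : ∀ τ ∈ Set.Icc (0:ℝ) T, HasDerivAt w (u' n τ - u' m τ) τ :=
      fun τ hτ => (hderiv n τ hτ).sub (hderiv m τ hτ)
    have hgd : ∀ τ ∈ Set.Icc (0:ℝ) T,
        HasDerivAt (fun s => ‖w s‖^2) (g' τ) τ := by
      intro τ hτ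
      have h1 := (hwd τ hτ).inner ℝ (hwd τ hτ)
      have h2 : (fun s => ⟪w s, w s⟫) = fun s => ‖w s‖^2 := by
        funext s; rw [real_inner_self_eq_norm_sq]
      rw [h2] at h1
      exact h1.congr_deriv (by simp only [hg']; rw [real_inner_comm (u' n τ - u' m τ) (w τ)]; ring)
    have hwc : ContinuousOn w (Set.Icc (0:ℝ) T) := (hucont n).sub (hucont m)
    have hg'c : ContinuousOn g' (Set.Icc (0:ℝ) T) :=
      ContinuousOn.mul continuousOn_const
        (ContinuousOn.inner ((hcont n).sub (hcont m)) hwc)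
    have hg'int : IntervalIntegrable g' volume 0 t := by
      apply ContinuousOn.intervalIntegrable
      rw [huIcc]; exact hg'c.mono hIcc_sub
    -- FTC
    have hftc : ∫ τ in (0:ℝ)..t, g' τ = ‖w t‖^2 - ‖w 0‖^2 := by
      apply intervalIntegral.integral_eq_sub_of_hasDerivAt
      · intro τ hτ; rw [huIcc] at hτ; exact hgd τ (hIcc_sub hτ)
      · exact hg'int
    -- pointwise bound on g' using the equation and monotonicity
    have hptwise : ∀ τ ∈ Set.Icc (0:ℝ) t,
        g' τ ≤ ε/T + K * ‖f n τ - f m τ‖^2 := by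
      intro τ hτ
      have hτT := hIcc_sub hτ
      have hun : u' n τ = f n τ - A (u n τ) := by
        have h := heq n τ hτT; rw [← h]; abel
      have hum : u' m τ = f m τ - A (u m τ) := by
        have h := heq m τ hτT; rw [← h]; abel
      have hsplit : g' τ = 2 * ⟪f n τ - f m τ, w τ⟫
          - 2 * ⟪A (u n τ) - A (u m τ), u n τ - u m τ⟫ := by
        simp only [hg', hun, hum]
        have heq2 : f n τ - A (u n τ) - (f m τ - A (u m τ))
            = (f n τ - f m τ) - (A (u n τ) - A (u m τ)) := by abel
        rw [heq2, inner_sub_left]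
        simp only [hw]
        ring
      have hmono := hAmono (u n τ) (u m τ)
      have hcs : ⟪f n τ - f m τ, w τ⟫ ≤ ‖f n τ - f m τ‖ * ‖w τ‖ :=
        real_inner_le_norm _ _
      have hwb : ‖w τ‖ ≤ 2*C := by
        calc ‖w τ‖ ≤ ‖u n τ‖ + ‖u m τ‖ := norm_sub_le _ _
        _ ≤ C + C := add_le_add (hCb n τ hτT) (hCb m τ hτT)
        _ = 2*C := by ring
      have hf0 : (0:ℝ) ≤ ‖f n τ - f m τ‖ := norm_nonneg _
      have hb1 : g' τ ≤ 2 * (‖f n τ - f m τ‖ * (2*C)) := by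
        rw [hsplit]
        have h3 : ⟪f n τ - f m τ, w τ⟫ ≤ ‖f n τ - f m τ‖ * (2*C) :=
          hcs.trans (mul_le_mul_of_nonneg_left hwb hf0)
        linarith
      refine hb1.trans ?_
      set a : ℝ := ‖f n τ - f m τ‖
      have h1 : (ε/T + (4*C^2*T/ε)*a^2 - 2*(a*(2*C))) * (ε*T) = (ε - 2*C*T*a)^2 := by
        field_simp; ring
      have := sq_nonneg (ε - 2*C*T*a)
      nlinarith [h1, sq_nonneg (ε - 2*C*T*a), mul_pos hε hT]
    -- integrate the bound
    have hKint : IntervalIntegrable (fun τ => K * ‖f n τ - f m τ‖^2) volume 0 t := by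
      apply ContinuousOn.intervalIntegrable
      rw [huIcc]
      exact continuousOn_const.mul
        (((((hfcont n).sub (hfcont m)).norm).pow 2).mono hIcc_sub)
    have hrhs_int : IntervalIntegrable (fun τ => ε/T + K * ‖f n τ - f m τ‖^2) volume 0 t :=
      intervalIntegrable_const.add hKint
    have hint_mono : ∫ τ in (0:ℝ)..t, g' τ
        ≤ ∫ τ in (0:ℝ)..t, (ε/T + K * ‖f n τ - f m τ‖^2) :=
      intervalIntegral.integral_mono_on ht0 hg'int hrhs_int hptwise
    have hsplit2 : ∫ τ in (0:ℝ)..t, (ε/T + K * ‖f n τ - f m τ‖^2)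
        = (ε/T)*t + K * ∫ τ in (0:ℝ)..t, ‖f n τ - f m τ‖^2 := by
      rw [intervalIntegral.integral_add intervalIntegrable_const hKint,
        intervalIntegral.integral_const, intervalIntegral.integral_const_mul]
      simp [smul_eq_mul]; ring
    have hsubint : ∫ τ in (0:ℝ)..t, ‖f n τ - f m τ‖^2
        ≤ ∫ τ in (0:ℝ)..T, ‖f n τ - f m τ‖^2 :=
      intervalIntegral.integral_mono_interval le_rfl ht0 htT
        (ae_of_all _ fun x => by positivity) (hfnm_int n m)
    have hεt : (ε/T)*t ≤ ε := by
      have h4 : (ε/T)*t ≤ (ε/T)*T := mul_le_mul_of_nonneg_left htT (by positivity)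
      rwa [div_mul_cancel₀ _ (ne_of_gt hT)] at h4
    have hw0 : w 0 = V n - V m := by simp [hw, hinit]
    have hKmul : K * ∫ τ in (0:ℝ)..t, ‖f n τ - f m τ‖^2
        ≤ K * ∫ τ in (0:ℝ)..T, ‖f n τ - f m τ‖^2 :=
      mul_le_mul_of_nonneg_left hsubint hK0
    rw [show w t = u n t - u m t from rfl, hw0] at hftc
    linarith [hftc, hint_mono, hsplit2, hεt, hKmul]
  -- the sequence (u n t) is Cauchy
  have hcauchy : CauchySeq (fun n => u n t) := by
    rw [Metric.cauchySeq_iff]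
    intro ε hε
    set ε' : ℝ := ε^2/4 with hε'def
    have hε' : (0:ℝ) < ε' := by positivity
    set K : ℝ := 4*C^2*T/ε' with hKdef
    have hK0 : (0:ℝ) ≤ K := by positivity
    have h1 : ∀ᶠ n in atTop, ‖V n - V₀‖ < Real.sqrt ε' / 2 :=
      hVconv.eventually_lt_const (by positivity)
    have h2 : ∀ᶠ n in atTop, (∫ τ in (0:ℝ)..T, ‖f n τ - f₀ τ‖^2) < ε'/(4*(K+1)) :=
      hfconv.eventually_lt_const (by positivity)
    obtain ⟨N, hN⟩ := eventually_atTop.mp (h1.and h2)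
    refine ⟨N, fun n hn m hm => ?_⟩
    obtain ⟨hn1, hn2⟩ := hN n hn
    obtain ⟨hm1, hm2⟩ := hN m hm
    have hVnm : ‖V n - V m‖^2 < ε' := by
      have htri : ‖V n - V m‖ ≤ ‖V n - V₀‖ + ‖V m - V₀‖ := by
        have : V n - V m = (V n - V₀) - (V m - V₀) := by abel
        rw [this]; exact norm_sub_le _ _
      have hlt : ‖V n - V m‖ < Real.sqrt ε' := by
        calc ‖V n - V m‖ ≤ ‖V n - V₀‖ + ‖V m - V₀‖ := htri
        _ < Real.sqrt ε' / 2 + Real.sqrt ε' / 2 := add_lt_add hn1 hm1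
        _ = Real.sqrt ε' := by ring
      have hsq : ‖V n - V m‖^2 < (Real.sqrt ε')^2 :=
        pow_lt_pow_left₀ hlt (norm_nonneg _) (by norm_num)
      rwa [Real.sq_sqrt hε'.le] at hsq
    -- the integral of ‖f n - f m‖² is small
    have hImono : (∫ τ in (0:ℝ)..T, ‖f n τ - f m τ‖^2)
        ≤ (∫ τ in (0:ℝ)..T, 2*‖f n τ - f₀ τ‖^2 + 2*‖f m τ - f₀ τ‖^2) := by
      apply intervalIntegral.integral_mono_on hT.le (hfnm_int n m)
        (((hfint n).const_mul 2).add ((hfint m).const_mul 2))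
      intro x hx
      have htri : ‖f n x - f m x‖ ≤ ‖f n x - f₀ x‖ + ‖f m x - f₀ x‖ := by
        have : f n x - f m x = (f n x - f₀ x) - (f m x - f₀ x) := by abel
        rw [this]; exact norm_sub_le _ _
      nlinarith [norm_nonneg (f n x - f₀ x), norm_nonneg (f m x - f₀ x),
        norm_nonneg (f n x - f m x), sq_nonneg (‖f n x - f₀ x‖ - ‖f m x - f₀ x‖)]
    have hIsum : (∫ τ in (0:ℝ)..T, 2*‖f n τ - f₀ τ‖^2 + 2*‖f m τ - f₀ τ‖^2)
        = 2*(∫ τ in (0:ℝ)..T, ‖f n τ - f₀ τ‖^2)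
          + 2*(∫ τ in (0:ℝ)..T, ‖f m τ - f₀ τ‖^2) := by
      rw [intervalIntegral.integral_add ((hfint n).const_mul 2) ((hfint m).const_mul 2),
        intervalIntegral.integral_const_mul, intervalIntegral.integral_const_mul]
    have hKI : K * (∫ τ in (0:ℝ)..T, ‖f n τ - f m τ‖^2) ≤ ε' := by
      have h4 : (0:ℝ) < K + 1 := by linarith
      have hIb : (∫ τ in (0:ℝ)..T, ‖f n τ - f m τ‖^2) ≤ ε'/(K+1) := by
        rw [hIsum] at hImono
        have h5 : 4 * (ε'/(4*(K+1))) = ε'/(K+1) := by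
          field_simp
        linarith
      calc K * (∫ τ in (0:ℝ)..T, ‖f n τ - f m τ‖^2) ≤ K * (ε'/(K+1)) :=
        mul_le_mul_of_nonneg_left hIb hK0
      _ ≤ (K+1) * (ε'/(K+1)) :=
        mul_le_mul_of_nonneg_right (by linarith) (by positivity)
      _ = ε' := by rw [mul_comm, div_mul_cancel₀ _ (ne_of_gt h4)]
    have hk := key ε' hε' n m
    have hfinal : ‖u n t - u m t‖^2 < ε^2 := by
      have : ‖u n t - u m t‖^2 ≤ ‖V n - V m‖^2 + ε' + ε' := by
        rw [← hKdef] at hk; linarith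
      have h5 : ε' + ε' + ε' < ε^2 := by rw [hε'def]; nlinarith
      linarith
    rw [dist_eq_norm]
    exact lt_of_pow_lt_pow_left₀ 2 hε.le hfinal
  -- identify the strong limit with u₀ t via weak convergence
  obtain ⟨W, hwlim⟩ := cauchySeq_tendsto_of_complete hcauchy
  have hWu : W = u₀ t := by
    have hv : ∀ v : H, ⟪W, v⟫ = ⟪u₀ t, v⟫ := by
      intro v
      have h1 : Tendsto (fun n => ⟪u n t, v⟫) atTop (nhds ⟪W, v⟫) :=
        hwlim.inner tendsto_const_nhds
      exact tendsto_nhds_unique h1 (hweak t ⟨ht0, htT⟩ v)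
    have h0 : ⟪W - u₀ t, W - u₀ t⟫ = (0:ℝ) := by
      rw [inner_sub_left, hv (W - u₀ t), sub_self]
    exact sub_eq_zero.mp (inner_self_eq_zero.mp h0)
  rw [hWu] at hwlim
  exact ⟨hwlim.norm, tendsto_iff_norm_sub_tendsto_zero.mp hwlim⟩
end

section
/- Let H be a real Hilbert space, T > 0, and let A : H → H be continuous and monotone, i.e. ⟨A x − A y, x − y⟩ ≥ 0 for all x, y ∈ H. For each n let u_n : [0,T] → H be continuously differentiable with u_n'(t) + A(u_n(t)) = f_n(t) for all t ∈ [0,T] and u_n(0) = V_n, where f_n : [0,T] → H is continuous and V_n ∈ H. Let u₀ : [0,T] → H be continuously differentiable, f : [0,T] → H continuous, and V ∈ H. Assume: (a) sup_n sup_{t ∈ [0,T]} ‖u_n(t)‖ < ∞; (b) for every t ∈ [0,T] and every v ∈ H, ⟨u_n(t), v⟩ → ⟨u₀(t), v⟩; (c) for every continuous φ : [0,T] → H, ∫₀ᵀ ⟨u_n'(τ), φ(τ)⟩ dτ → ∫₀ᵀ ⟨u₀'(τ), φ(τ)⟩ dτ; (d) ∫₀ᵀ ‖f_n(τ) − f(τ)‖²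 dτ → 0; (e) ‖V_n − V‖ → 0. Then u₀(0) = V and u₀'(t) + A(u₀(t)) = f(t) for all t ∈ [0,T]. (Identification of the limit equation in the model case of the Minty monotonicity method, Appendix A.) -/
open MeasureTheory Filter RealInnerProductSpace

private lemma aux_sq_add (x y : ℝ) : (x + y)^2 ≤ 2*x^2 + 2*y^2 := by nlinarith [sq_nonneg (x - y)]

private lemma aux_delta_tendsto (s b : ℕ → ℝ) (C : ℝ) (hC : 0 ≤ C)
    (hb : Tendsto b atTop (nhds 0)) (hb0 : ∀ n, 0 ≤ b n)
    (h : ∀ δ : ℝ, 0 < δ → ∀ n, |s n| ≤ δ * C + b n / δ) :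
    Tendsto s atTop (nhds 0) := by
  rw [Metric.tendsto_atTop]
  intro ε hε
  set δ : ℝ := ε / (2 * (C + 1)) with hδdef
  have hδ : 0 < δ := by positivity
  have hbev : ∀ᶠ n in atTop, b n < δ * (ε / 2) :=
    hb.eventually (eventually_lt_nhds (by positivity))
  rcases (eventually_atTop.mp hbev) with ⟨N, hN⟩
  refine ⟨N, fun n hn => ?_⟩
  have h1 := h δ hδ n
  have h2 : b n < δ * (ε/2) := hN n hn
  have h3 : b n / δ < ε / 2 := by
    rw [div_lt_iff₀ hδ]
    linarith [h2]
  have h4 : δ * C ≤ ε / 2 := by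
    rw [hδdef]
    rw [div_mul_eq_mul_div, div_le_div_iff₀ (by positivity) (by norm_num : (0:ℝ) < 2)]
    nlinarith
  rw [Real.dist_eq, sub_zero]
  calc |s n| ≤ δ * C + b n / δ := h1
    _ < ε/2 + ε/2 := by linarith
    _ = ε := by ring

private lemma minty_gronwall {H : Type*} [NormedAddCommGroup H] [InnerProductSpace ℝ H]
    (T : ℝ) (hT : 0 < T) (w w' : ℝ → H) (g : ℝ → ℝ)
    (hw : ∀ t ∈ Set.Icc (0:ℝ) T, HasDerivAt w (w' t) t)
    (hg : Continuous g) (hg0 : ∀ t, 0 ≤ g t)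
    (hineq : ∀ t ∈ Set.Icc (0:ℝ) T, 2 * ⟪w' t, w t⟫ ≤ ‖w t‖^2 + g t) :
    ∀ t ∈ Set.Icc (0:ℝ) T, ‖w t‖^2 ≤ Real.exp T * (‖w 0‖^2 + ∫ τ in (0:ℝ)..T, g τ) := by
  set Φ : ℝ → ℝ := fun t => Real.exp (-t) * ⟪w t, w t⟫ - ∫ τ in (0:ℝ)..t, g τ with hΦ
  have hgi : ∀ t : ℝ, HasDerivAt (fun s => ∫ τ in (0:ℝ)..s, g τ) (g t) t := fun t =>
    intervalIntegral.integral_hasDerivAt_right (hg.intervalIntegrable _ _)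
      (hg.stronglyMeasurableAtFilter _ _) hg.continuousAt
  have hΦd : ∀ t ∈ Set.Icc (0:ℝ) T,
      HasDerivAt Φ (Real.exp (-t) * (2 * ⟪w' t, w t⟫ - ⟪w t, w t⟫) - g t) t := by
    intro t ht
    have he : HasDerivAt (fun s : ℝ => Real.exp (-s)) (-Real.exp (-t)) t := by
      simpa [Function.comp_def] using ((Real.hasDerivAt_exp (-t)).comp t (hasDerivAt_neg t))
    have hp : HasDerivAt (fun s => ⟪w s, w s⟫) (2 * ⟪w' t, w t⟫) t := by
      have := (hw t ht).inner ℝ (hw t ht)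
      simpa [real_inner_comm, two_mul] using this
    have := (he.mul hp).sub (hgi t)
    convert this using 1
    all_goals try rfl
    ring
  have hanti : AntitoneOn Φ (Set.Icc 0 T) := by
    apply antitoneOn_of_deriv_nonpos (convex_Icc 0 T)
    · intro t ht
      exact ((hΦd t ht).continuousAt).continuousWithinAt
    · intro t ht
      rw [interior_Icc] at ht
      exact (hΦd t ⟨ht.1.le, ht.2.le⟩).differentiableAt.differentiableWithinAt
    · intro t ht
      rw [interior_Icc] at ht
      have ht' : t ∈ Set.Icc (0:ℝ) T := ⟨ht.1.le, ht.2.le⟩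
      rw [(hΦd t ht').deriv]
      have h1 : 2 * ⟪w' t, w t⟫ - ⟪w t, w t⟫ ≤ g t := by
        have := hineq t ht'
        have hn : ⟪w t, w t⟫ = ‖w t‖^2 := real_inner_self_eq_norm_sq _
        linarith
      have h2 : Real.exp (-t) ≤ 1 := Real.exp_le_one_iff.mpr (by linarith [ht.1])
      have h3 : (0:ℝ) < Real.exp (-t) := Real.exp_pos _
      nlinarith [hg0 t, mul_le_mul_of_nonneg_left h1 h3.le]
  intro t ht
  have h0 : Φ t ≤ Φ 0 := hanti (Set.left_mem_Icc.mpr hT.le) ht ht.1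
  have hint : (∫ τ in (0:ℝ)..t, g τ) ≤ ∫ τ in (0:ℝ)..T, g τ :=
    intervalIntegral.integral_mono_interval le_rfl ht.1 ht.2
      (Filter.Eventually.of_forall fun x => hg0 x) (hg.intervalIntegrable _ _)
  have hΦ0 : Φ 0 = ‖w 0‖^2 := by
    simp [hΦ, real_inner_self_eq_norm_sq]
  have hkey : Real.exp (-t) * ‖w t‖^2 ≤ ‖w 0‖^2 + ∫ τ in (0:ℝ)..T, g τ := by
    have : Real.exp (-t) * ⟪w t, w t⟫ - ∫ τ in (0:ℝ)..t, g τ ≤ ‖w 0‖^2 := by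
      rw [← hΦ0]; exact h0
    rw [real_inner_self_eq_norm_sq] at this
    linarith
  have hexp : Real.exp (-t) = (Real.exp t)⁻¹ := by rw [Real.exp_neg]
  have h4 : (0:ℝ) < Real.exp t := Real.exp_pos _
  have h5 : Real.exp t ≤ Real.exp T := Real.exp_le_exp.mpr ht.2
  have h6 : 0 ≤ ‖w 0‖^2 + ∫ τ in (0:ℝ)..T, g τ := by
    have : 0 ≤ ∫ τ in (0:ℝ)..T, g τ :=
      intervalIntegral.integral_nonneg hT.le fun x _ => hg0 x
    positivity
  calc ‖w t‖^2 = Real.exp t * (Real.exp (-t) * ‖w t‖^2) := by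
        rw [hexp]; field_simp
    _ ≤ Real.exp t * (‖w 0‖^2 + ∫ τ in (0:ℝ)..T, g τ) := by
        apply mul_le_mul_of_nonneg_left hkey h4.le
    _ ≤ Real.exp T * (‖w 0‖^2 + ∫ τ in (0:ℝ)..T, g τ) := by
        apply mul_le_mul_of_nonneg_right h5 h6


/-- Identification of the limit equation in the model case of the
Minty monotonicity method: under uniform boundedness, weak convergence of
`u_n(t)` and of the derivatives (tested against continuous functions), strong
convergence of the data `f_n → f` in `L²` and `V_n → V` in `H`, the limit
satisfies `u₀(0) = V` and the limit equation `u₀' + A u₀ = f` on `[0,T]`. -/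
theorem minty_limit_identification
    {H : Type*} [NormedAddCommGroup H] [InnerProductSpace ℝ H] [CompleteSpace H]
    (T : ℝ) (hT : 0 < T) (A : H → H)
    (hAcont : Continuous A)
    (hAmono : ∀ x y : H, 0 ≤ ⟪A x - A y, x - y⟫)
    (u : ℕ → ℝ → H) (u' : ℕ → ℝ → H) (f : ℕ → ℝ → H) (V : ℕ → H)
    (u₀ u₀' : ℝ → H) (f₀ : ℝ → H) (V₀ : H)
    (hderiv : ∀ n, ∀ t ∈ Set.Icc (0 : ℝ) T, HasDerivAt (u n) (u' n t) t)
    (hcont : ∀ n, ContinuousOn (u' n) (Set.Icc 0 T))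
    (hfcont : ∀ n, ContinuousOn (f n) (Set.Icc 0 T))
    (heq : ∀ n, ∀ t ∈ Set.Icc (0 : ℝ) T, u' n t + A (u n t) = f n t)
    (hinit : ∀ n, u n 0 = V n)
    (hderiv₀ : ∀ t ∈ Set.Icc (0 : ℝ) T, HasDerivAt u₀ (u₀' t) t)
    (hcont₀ : ContinuousOn u₀' (Set.Icc 0 T))
    (hf₀cont : ContinuousOn f₀ (Set.Icc 0 T))
    -- (a) uniform boundedness
    (hbound : ∃ C : ℝ, ∀ n, ∀ t ∈ Set.Icc (0 : ℝ) T, ‖u n t‖ ≤ C)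
    -- (b) pointwise-in-time weak convergence
    (hweak : ∀ t ∈ Set.Icc (0 : ℝ) T, ∀ v : H,
      Tendsto (fun n => ⟪u n t, v⟫) atTop (nhds ⟪u₀ t, v⟫))
    -- (c) weak convergence of derivatives against continuous test functions
    (hweak' : ∀ φ : ℝ → H, Continuous φ →
      Tendsto (fun n => ∫ τ in (0 : ℝ)..T, ⟪u' n τ, φ τ⟫) atTop
        (nhds (∫ τ in (0 : ℝ)..T, ⟪u₀' τ, φ τ⟫)))
    -- (d) strong L² convergence of the right-hand sides
    (hfconv : Tendsto (fun n => ∫ τ in (0 : ℝ)..T, ‖f n τ - f₀ τ‖ ^ 2)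
      atTop (nhds 0))
    -- (e) strong convergence of the initial data
    (hVconv : Tendsto (fun n => ‖V n - V₀‖) atTop (nhds 0)) :
    u₀ 0 = V₀ ∧
      ∀ t ∈ Set.Icc (0 : ℝ) T, u₀' t + A (u₀ t) = f₀ t := by
  have huIcc : Set.uIcc (0:ℝ) T = Set.Icc 0 T := Set.uIcc_of_le hT.le
  have huIoc : Set.uIoc (0:ℝ) T = Set.Ioc 0 T := Set.uIoc_of_le hT.le
  have hIocsub : Set.Ioc (0:ℝ) T ⊆ Set.Icc 0 T := Set.Ioc_subset_Icc_self
  have hucont : ∀ n, ContinuousOn (u n) (Set.Icc 0 T) := fun n t ht =>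
    ((hderiv n t ht).continuousAt).continuousWithinAt
  have hucont₀ : ContinuousOn u₀ (Set.Icc 0 T) := fun t ht =>
    ((hderiv₀ t ht).continuousAt).continuousWithinAt
  -- the clamp map
  set proj : ℝ → ℝ := fun τ => max 0 (min τ T) with hprojdef
  have hproj_cont : Continuous proj := continuous_const.max (continuous_id.min continuous_const)
  have hproj_mem : ∀ τ, proj τ ∈ Set.Icc (0:ℝ) T :=
    fun τ => ⟨le_max_left _ _, max_le hT.le (min_le_right _ _)⟩
  have hproj_id : ∀ τ ∈ Set.Icc (0:ℝ) T, proj τ = τ := by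
    intro τ hτ
    simp only [hprojdef]
    rw [min_eq_left hτ.2, max_eq_right hτ.1]
  -- abbreviations
  set a : ℕ → ℝ := fun n => ‖V n - V₀‖^2 with hadef
  set b : ℕ → ℝ := fun n => ∫ τ in (0:ℝ)..T, ‖f n τ - f₀ τ‖^2 with hbdef
  have ha0 : ∀ n, 0 ≤ a n := fun n => sq_nonneg _
  have hfInt : ∀ n, IntervalIntegrable (fun τ => ‖f n τ - f₀ τ‖^2) volume 0 T := by
    intro n
    apply ContinuousOn.intervalIntegrable
    rw [huIcc]
    exact (((hfcont n).sub hf₀cont).norm).pow 2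
  have hb0 : ∀ n, 0 ≤ b n := fun n =>
    intervalIntegral.integral_nonneg hT.le fun x _ => sq_nonneg _
  have ha : Tendsto a atTop (nhds 0) := by
    have := hVconv.pow 2
    simpa using this
  have hb : Tendsto b atTop (nhds 0) := hfconv
  have hu'eq : ∀ n, ∀ t ∈ Set.Icc (0:ℝ) T, u' n t = f n t - A (u n t) := fun n t ht =>
    eq_sub_of_add_eq (heq n t ht)
  -- the pairwise Gronwall estimate
  set P : ℕ → ℕ → ℝ := fun n m => Real.exp T * (2*a n + 2*a m + 2*b n + 2*b m) with hPdef
  have hkey : ∀ n m, ∀ t ∈ Set.Icc (0:ℝ) T, ‖u n t - u m t‖^2 ≤ P n m := by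
    intro n m
    set g : ℝ → ℝ := fun τ => ‖f n (proj τ) - f m (proj τ)‖^2 with hgdef
    have hgc : Continuous g := by
      have h1 : ContinuousOn (fun τ => ‖f n τ - f m τ‖^2) (Set.Icc 0 T) :=
        (((hfcont n).sub (hfcont m)).norm).pow 2
      exact h1.comp_continuous hproj_cont hproj_mem
    have hg0 : ∀ t, 0 ≤ g t := fun t => sq_nonneg _
    have hw : ∀ t ∈ Set.Icc (0:ℝ) T, HasDerivAt (fun s => u n s - u m s) (u' n t - u' m t) t :=
      fun t ht => (hderiv n t ht).sub (hderiv m t ht)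
    have hineq : ∀ t ∈ Set.Icc (0:ℝ) T,
        2 * ⟪u' n t - u' m t, u n t - u m t⟫ ≤ ‖u n t - u m t‖^2 + g t := by
      intro t ht
      have hgt : g t = ‖f n t - f m t‖^2 := by
        rw [hgdef]
        simp only [hproj_id t ht]
      have e1 : u' n t - u' m t = (f n t - f m t) - (A (u n t) - A (u m t)) := by
        rw [hu'eq n t ht, hu'eq m t ht]; abel
      rw [e1, hgt, inner_sub_left]
      have hmono := hAmono (u n t) (u m t)
      have hCS : ⟪f n t - f m t, u n t - u m t⟫ ≤ ‖f n t - f m t‖ * ‖u n t - u m t‖ :=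
        real_inner_le_norm _ _
      nlinarith [sq_nonneg (‖f n t - f m t‖ - ‖u n t - u m t‖)]
    have hmain := minty_gronwall T hT _ _ g hw hgc hg0 hineq
    intro t ht
    refine le_trans (hmain t ht) ?_
    have hgeq : (∫ τ in (0:ℝ)..T, g τ) = ∫ τ in (0:ℝ)..T, ‖f n τ - f m τ‖^2 := by
      apply intervalIntegral.integral_congr
      intro τ hτ
      rw [huIcc] at hτ
      rw [hgdef]
      simp only [hproj_id τ hτ]
    have hfnmInt : IntervalIntegrable (fun τ => ‖f n τ - f m τ‖^2) volume 0 T := by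
      apply ContinuousOn.intervalIntegrable
      rw [huIcc]
      exact (((hfcont n).sub (hfcont m)).norm).pow 2
    have hintle : (∫ τ in (0:ℝ)..T, ‖f n τ - f m τ‖^2) ≤ 2 * b n + 2 * b m := by
      have hpt : ∀ τ ∈ Set.Icc (0:ℝ) T,
          ‖f n τ - f m τ‖^2 ≤ 2*‖f n τ - f₀ τ‖^2 + 2*‖f m τ - f₀ τ‖^2 := by
        intro τ hτ
        have htri : ‖f n τ - f m τ‖ ≤ ‖f n τ - f₀ τ‖ + ‖f m τ - f₀ τ‖ := by
          have h := norm_sub_le (f n τ - f₀ τ) (f m τ - f₀ τ)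
          rw [sub_sub_sub_cancel_right] at h
          exact h
        calc ‖f n τ - f m τ‖^2 ≤ (‖f n τ - f₀ τ‖ + ‖f m τ - f₀ τ‖)^2 :=
              pow_le_pow_left₀ (norm_nonneg _) htri 2
          _ ≤ _ := aux_sq_add _ _
      have h2 : (∫ τ in (0:ℝ)..T, ‖f n τ - f m τ‖^2) ≤
          ∫ τ in (0:ℝ)..T, (2*‖f n τ - f₀ τ‖^2 + 2*‖f m τ - f₀ τ‖^2) := by
        apply intervalIntegral.integral_mono_on hT.le hfnmInt
          (((hfInt n).const_mul 2).add ((hfInt m).const_mul 2)) hpt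
      have h3 : (∫ τ in (0:ℝ)..T, (2*‖f n τ - f₀ τ‖^2 + 2*‖f m τ - f₀ τ‖^2))
          = 2 * b n + 2 * b m := by
        rw [intervalIntegral.integral_add ((hfInt n).const_mul 2) ((hfInt m).const_mul 2),
          intervalIntegral.integral_const_mul, intervalIntegral.integral_const_mul]
      linarith
    have hV2 : ‖u n 0 - u m 0‖^2 ≤ 2 * a n + 2 * a m := by
      rw [hinit n, hinit m]
      have htri : ‖V n - V m‖ ≤ ‖V n - V₀‖ + ‖V m - V₀‖ := by
        have h := norm_sub_le (V n - V₀) (V m - V₀)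
        rw [sub_sub_sub_cancel_right] at h
        exact h
      calc ‖V n - V m‖^2 ≤ (‖V n - V₀‖ + ‖V m - V₀‖)^2 :=
            pow_le_pow_left₀ (norm_nonneg _) htri 2
        _ ≤ _ := aux_sq_add _ _
    rw [hPdef]
    apply mul_le_mul_of_nonneg_left _ (Real.exp_pos T).le
    rw [hgeq]
    linarith
  -- uniform estimate against the limit
  set Q : ℕ → ℝ := fun n => Real.exp T * (2*a n + 2*b n) with hQdef
  have hQ0 : ∀ n, 0 ≤ Q n := by
    intro n
    have := ha0 n; have := hb0 n
    positivity
  have hQconv : Tendsto Q atTop (nhds 0) := by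
    have h1 : Tendsto (fun n => 2*a n + 2*b n) atTop (nhds (2*0 + 2*0)) :=
      ((ha.const_mul 2).add (hb.const_mul 2))
    have h2 := h1.const_mul (Real.exp T)
    simpa using h2
  have hsqQ : Tendsto (fun n => Real.sqrt (Q n)) atTop (nhds 0) := by
    have := (Real.continuous_sqrt.tendsto 0).comp hQconv
    simpa [Function.comp_def] using this
  have hU : ∀ n, ∀ t ∈ Set.Icc (0:ℝ) T, ‖u n t - u₀ t‖ ≤ Real.sqrt (Q n) := by
    intro n t ht
    set v : H := u n t - u₀ t with hvdef
    set c : ℝ := ‖v‖ with hcdef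
    have htendP : Tendsto (fun m => P n m) atTop (nhds (Q n)) := by
      rw [hPdef, hQdef]
      have h1 : Tendsto (fun m => 2*a n + 2*a m + 2*b n + 2*b m) atTop
          (nhds (2*a n + 2*0 + 2*b n + 2*0)) := by
        exact (((tendsto_const_nhds.add (ha.const_mul 2)).add tendsto_const_nhds).add
          (hb.const_mul 2))
      have h2 := h1.const_mul (Real.exp T)
      simpa [mul_comm] using h2.congr (fun m => rfl)
    have htendB : Tendsto (fun m => Real.sqrt (P n m) * c) atTop
        (nhds (Real.sqrt (Q n) * c)) :=
      (((Real.continuous_sqrt.tendsto _).comp htendP).mul_const c)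
    have htendI : Tendsto (fun m => ⟪u n t - u m t, v⟫) atTop (nhds ⟪u n t - u₀ t, v⟫) := by
      have h1 := hweak t ht v
      have h2 : Tendsto (fun m => ⟪u n t, v⟫ - ⟪u m t, v⟫) atTop
          (nhds (⟪u n t, v⟫ - ⟪u₀ t, v⟫)) := tendsto_const_nhds.sub h1
      simpa [inner_sub_left] using h2
    have hle : ∀ m, ⟪u n t - u m t, v⟫ ≤ Real.sqrt (P n m) * c := by
      intro m
      have h1 : ⟪u n t - u m t, v⟫ ≤ ‖u n t - u m t‖ * c := by
        rw [hcdef]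
        exact real_inner_le_norm _ _
      have hP0 : (0:ℝ) ≤ P n m := by
        have := ha0 n; have := ha0 m; have := hb0 n; have := hb0 m
        rw [hPdef]; positivity
      have h2 : ‖u n t - u m t‖ ≤ Real.sqrt (P n m) := by
        rw [Real.le_sqrt (norm_nonneg _) hP0]
        exact hkey n m t ht
      have h3 : ‖u n t - u m t‖ * c ≤ Real.sqrt (P n m) * c :=
        mul_le_mul_of_nonneg_right h2 (norm_nonneg _)
      linarith
    have hc2 : c^2 ≤ Real.sqrt (Q n) * c := by
      have h := le_of_tendsto_of_tendsto' htendI htendB hle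
      rw [hvdef] at h
      calc c^2 = ⟪u n t - u₀ t, v⟫ := by
            rw [hcdef, hvdef, real_inner_self_eq_norm_sq]
        _ ≤ Real.sqrt (Q n) * c := h
    rcases eq_or_lt_of_le (norm_nonneg v) with h0 | h0
    · rw [hcdef, ← h0]
      exact Real.sqrt_nonneg _
    · have : c ≤ Real.sqrt (Q n) := by nlinarith
      exact this
  -- pointwise strong convergence
  have hstrong : ∀ t ∈ Set.Icc (0:ℝ) T, Tendsto (fun n => u n t) atTop (nhds (u₀ t)) := by
    intro t ht
    rw [tendsto_iff_norm_sub_tendsto_zero]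
    exact squeeze_zero (fun n => norm_nonneg _) (fun n => hU n t ht) hsqQ
  -- Part 1
  have hpart1 : u₀ 0 = V₀ := by
    have h0 : (0:ℝ) ∈ Set.Icc (0:ℝ) T := Set.left_mem_Icc.mpr hT.le
    have h1 : Tendsto (fun n => u n 0) atTop (nhds (u₀ 0)) := hstrong 0 h0
    have h2 : Tendsto (fun n => u n 0) atTop (nhds V₀) := by
      rw [tendsto_iff_norm_sub_tendsto_zero]
      simpa [hinit] using hVconv
    exact tendsto_nhds_unique h1 h2
  refine ⟨hpart1, ?_⟩
  -- compactness and bound for A on the trajectories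
  set J := Set.Icc (0:ℝ) T
  set gg : ℕ → C(J, H) := fun n => ⟨fun τ => u n τ, (continuousOn_iff_continuous_restrict.mp
    (hucont n))⟩ with hggdef
  set glim : C(J, H) := ⟨fun τ => u₀ τ, (continuousOn_iff_continuous_restrict.mp hucont₀)⟩
    with hglimdef
  have hggconv : Tendsto gg atTop (nhds glim) := by
    rw [ContinuousMap.tendsto_iff_tendstoUniformly]
    rw [Metric.tendstoUniformly_iff]
    intro ε hε
    filter_upwards [hsqQ.eventually (eventually_lt_nhds hε)] with n hn τ
    calc dist (glim τ) (gg n τ) = ‖u n ↑τ - u₀ ↑τ‖ := by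
          rw [dist_comm, dist_eq_norm]; rfl
      _ ≤ Real.sqrt (Q n) := hU n τ τ.2
      _ < ε := hn
  have hScomp : IsCompact (insert glim (Set.range gg)) := hggconv.isCompact_insert_range
  set K : Set H := (fun p : C(J, H) × J => p.1 p.2) ''
    ((insert glim (Set.range gg)) ×ˢ (Set.univ : Set J)) with hKdef
  have hKcomp : IsCompact K := (hScomp.prod isCompact_univ).image continuous_eval
  have hmemK : ∀ n, ∀ τ ∈ Set.Icc (0:ℝ) T, u n τ ∈ K := by
    intro n τ hτ
    exact ⟨(gg n, ⟨τ, hτ⟩), ⟨Set.mem_insert_of_mem _ (Set.mem_range_self n), Set.mem_univ _⟩, rfl⟩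
  have hmemK₀ : ∀ τ ∈ Set.Icc (0:ℝ) T, u₀ τ ∈ K := by
    intro τ hτ
    exact ⟨(glim, ⟨τ, hτ⟩), ⟨Set.mem_insert _ _, Set.mem_univ _⟩, rfl⟩
  obtain ⟨M, hM⟩ : ∃ M : ℝ, ∀ x ∈ K, ‖A x‖ ≤ M :=
    hKcomp.exists_bound_of_continuousOn hAcont.continuousOn
  -- convergence of the A-terms
  have hAconv : ∀ φ : ℝ → H, Continuous φ →
      Tendsto (fun n => ∫ τ in (0:ℝ)..T, ⟪A (u n τ), φ τ⟫) atTop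
        (nhds (∫ τ in (0:ℝ)..T, ⟪A (u₀ τ), φ τ⟫)) := by
    intro φ hφ
    apply intervalIntegral.tendsto_integral_filter_of_dominated_convergence
      (fun τ => M * ‖φ τ‖)
    · filter_upwards with n
      apply ContinuousOn.aestronglyMeasurable _ measurableSet_uIoc
      rw [huIoc]
      exact (((hAcont.comp_continuousOn (hucont n)).inner hφ.continuousOn).mono hIocsub)
    · filter_upwards with n
      filter_upwards with τ hτ
      rw [huIoc] at hτ
      have h1 : ‖⟪A (u n τ), φ τ⟫‖ ≤ ‖A (u n τ)‖ * ‖φ τ‖ := by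
        rw [Real.norm_eq_abs]
        exact abs_real_inner_le_norm _ _
      have h2 : ‖A (u n τ)‖ ≤ M := hM _ (hmemK n τ (hIocsub hτ))
      calc ‖⟪A (u n τ), φ τ⟫‖ ≤ ‖A (u n τ)‖ * ‖φ τ‖ := h1
        _ ≤ M * ‖φ τ‖ := mul_le_mul_of_nonneg_right h2 (norm_nonneg _)
    · exact (continuous_const.mul hφ.norm).intervalIntegrable _ _
    · filter_upwards with τ hτ
      rw [huIoc] at hτ
      have h1 : Tendsto (fun n => A (u n τ)) atTop (nhds (A (u₀ τ))) :=
        (hAcont.tendsto _).comp (hstrong τ (hIocsub hτ))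
      exact h1.inner tendsto_const_nhds
  -- convergence of the f-terms
  have hfφconv : ∀ φ : ℝ → H, Continuous φ →
      Tendsto (fun n => ∫ τ in (0:ℝ)..T, ⟪f n τ, φ τ⟫) atTop
        (nhds (∫ τ in (0:ℝ)..T, ⟪f₀ τ, φ τ⟫)) := by
    intro φ hφ
    have hφInt2 : IntervalIntegrable (fun τ => ‖φ τ‖^2) volume 0 T :=
      ((hφ.norm.pow 2)).intervalIntegrable _ _
    set Cφ : ℝ := ∫ τ in (0:ℝ)..T, ‖φ τ‖^2 with hCφdef
    have hCφ0 : 0 ≤ Cφ := intervalIntegral.integral_nonneg hT.le fun x _ => sq_nonneg _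
    set s : ℕ → ℝ := fun n => ∫ τ in (0:ℝ)..T, ⟪f n τ - f₀ τ, φ τ⟫ with hsdef
    have hIntInner : ∀ n, IntervalIntegrable (fun τ => ⟪f n τ - f₀ τ, φ τ⟫) volume 0 T := by
      intro n
      apply ContinuousOn.intervalIntegrable
      rw [huIcc]
      exact ((hfcont n).sub hf₀cont).inner hφ.continuousOn
    have hfnInt : ∀ n, IntervalIntegrable (fun τ => ⟪f n τ, φ τ⟫) volume 0 T := by
      intro n
      apply ContinuousOn.intervalIntegrable
      rw [huIcc]
      exact (hfcont n).inner hφ.continuousOn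
    have hf₀Int : IntervalIntegrable (fun τ => ⟪f₀ τ, φ τ⟫) volume 0 T := by
      apply ContinuousOn.intervalIntegrable
      rw [huIcc]
      exact hf₀cont.inner hφ.continuousOn
    have hs0 : Tendsto s atTop (nhds 0) := by
      apply aux_delta_tendsto s b Cφ hCφ0 hb hb0
      intro δ hδ n
      have habs : |s n| ≤ ∫ τ in (0:ℝ)..T, |⟪f n τ - f₀ τ, φ τ⟫| :=
        intervalIntegral.abs_integral_le_integral_abs hT.le
      have hbdInt : IntervalIntegrable
          (fun τ => (1/(2*δ))*‖f n τ - f₀ τ‖^2 + (δ/2)*‖φ τ‖^2) volume 0 T :=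
        ((hfInt n).const_mul _).add (hφInt2.const_mul _)
      have habsInt : IntervalIntegrable (fun τ => |⟪f n τ - f₀ τ, φ τ⟫|) volume 0 T :=
        (hIntInner n).abs
      have hptbd : ∀ τ ∈ Set.Icc (0:ℝ) T,
          |⟪f n τ - f₀ τ, φ τ⟫| ≤ (1/(2*δ))*‖f n τ - f₀ τ‖^2 + (δ/2)*‖φ τ‖^2 := by
        intro τ hτ
        have h1 : |⟪f n τ - f₀ τ, φ τ⟫| ≤ ‖f n τ - f₀ τ‖ * ‖φ τ‖ :=
          abs_real_inner_le_norm _ _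
        have h3 : (1/(2*δ))*‖f n τ - f₀ τ‖^2 + (δ/2)*‖φ τ‖^2 - ‖f n τ - f₀ τ‖ * ‖φ τ‖
            = (1/(2*δ)) * (‖f n τ - f₀ τ‖ - δ*‖φ τ‖)^2 := by
          field_simp
          ring
        have h4 : 0 ≤ (1/(2*δ)) * (‖f n τ - f₀ τ‖ - δ*‖φ τ‖)^2 :=
          mul_nonneg (by positivity) (sq_nonneg _)
        linarith
      have h2 : (∫ τ in (0:ℝ)..T, |⟪f n τ - f₀ τ, φ τ⟫|) ≤
          ∫ τ in (0:ℝ)..T, ((1/(2*δ))*‖f n τ - f₀ τ‖^2 + (δ/2)*‖φ τ‖^2) :=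
        intervalIntegral.integral_mono_on hT.le habsInt hbdInt hptbd
      have h3 : (∫ τ in (0:ℝ)..T, ((1/(2*δ))*‖f n τ - f₀ τ‖^2 + (δ/2)*‖φ τ‖^2))
          = (1/(2*δ)) * b n + (δ/2) * Cφ := by
        rw [intervalIntegral.integral_add ((hfInt n).const_mul _) (hφInt2.const_mul _),
          intervalIntegral.integral_const_mul, intervalIntegral.integral_const_mul]
      have h4 : (1/(2*δ)) * b n ≤ b n / δ := by
        have hh : (1/(2*δ)) ≤ 1/δ := one_div_le_one_div_of_le hδ (by linarith)
        calc (1/(2*δ)) * b n ≤ (1/δ) * b n := mul_le_mul_of_nonneg_right hh (hb0 n)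
          _ = b n / δ := by rw [one_div, ← div_eq_inv_mul]
      have h5 : (δ/2) * Cφ ≤ δ * Cφ := by nlinarith
      calc |s n| ≤ ∫ τ in (0:ℝ)..T, |⟪f n τ - f₀ τ, φ τ⟫| := habs
        _ ≤ (1/(2*δ)) * b n + (δ/2) * Cφ := by rw [← h3]; exact h2
        _ ≤ δ * Cφ + b n / δ := by linarith
    have heqn : ∀ n, s n = (∫ τ in (0:ℝ)..T, ⟪f n τ, φ τ⟫)
        - ∫ τ in (0:ℝ)..T, ⟪f₀ τ, φ τ⟫ := by
      intro n
      rw [hsdef]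
      simp only [inner_sub_left]
      exact intervalIntegral.integral_sub (hfnInt n) hf₀Int
    have := hs0.add (tendsto_const_nhds (x := ∫ τ in (0:ℝ)..T, ⟪f₀ τ, φ τ⟫))
    rw [zero_add] at this
    apply this.congr
    intro n
    rw [heqn n]
    ring
  -- the u' integrals via the equation
  have hu'int : ∀ (φ : ℝ → H), Continuous φ → ∀ n,
      (∫ τ in (0:ℝ)..T, ⟪u' n τ, φ τ⟫)
        = (∫ τ in (0:ℝ)..T, ⟪f n τ, φ τ⟫) - ∫ τ in (0:ℝ)..T, ⟪A (u n τ), φ τ⟫ := by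
    intro φ hφ n
    have hAInt : IntervalIntegrable (fun τ => ⟪A (u n τ), φ τ⟫) volume 0 T := by
      apply ContinuousOn.intervalIntegrable
      rw [huIcc]
      exact (hAcont.comp_continuousOn (hucont n)).inner hφ.continuousOn
    have hfnInt : IntervalIntegrable (fun τ => ⟪f n τ, φ τ⟫) volume 0 T := by
      apply ContinuousOn.intervalIntegrable
      rw [huIcc]
      exact (hfcont n).inner hφ.continuousOn
    rw [← intervalIntegral.integral_sub hfnInt hAInt]
    apply intervalIntegral.integral_congr
    intro τ hτ
    rw [huIcc] at hτ
    show ⟪u' n τ, φ τ⟫ = ⟪f n τ, φ τ⟫ - ⟪A (u n τ), φ τ⟫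
    rw [hu'eq n τ hτ, inner_sub_left]
  -- identification: the limit integral identity
  have hid : ∀ (φ : ℝ → H), Continuous φ →
      (∫ τ in (0:ℝ)..T, ⟪u₀' τ + A (u₀ τ) - f₀ τ, φ τ⟫) = 0 := by
    intro φ hφ
    have hAInt₀ : IntervalIntegrable (fun τ => ⟪A (u₀ τ), φ τ⟫) volume 0 T := by
      apply ContinuousOn.intervalIntegrable
      rw [huIcc]
      exact (hAcont.comp_continuousOn hucont₀).inner hφ.continuousOn
    have hu₀Int : IntervalIntegrable (fun τ => ⟪u₀' τ, φ τ⟫) volume 0 T := by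
      apply ContinuousOn.intervalIntegrable
      rw [huIcc]
      exact hcont₀.inner hφ.continuousOn
    have hf₀Int : IntervalIntegrable (fun τ => ⟪f₀ τ, φ τ⟫) volume 0 T := by
      apply ContinuousOn.intervalIntegrable
      rw [huIcc]
      exact hf₀cont.inner hφ.continuousOn
    have hlim1 : Tendsto (fun n => ∫ τ in (0:ℝ)..T, ⟪u' n τ, φ τ⟫) atTop
        (nhds ((∫ τ in (0:ℝ)..T, ⟪f₀ τ, φ τ⟫) - ∫ τ in (0:ℝ)..T, ⟪A (u₀ τ), φ τ⟫)) := by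
      have := (hfφconv φ hφ).sub (hAconv φ hφ)
      apply this.congr
      intro n
      exact (hu'int φ hφ n).symm
    have hlim2 := hweak' φ hφ
    have huniq : (∫ τ in (0:ℝ)..T, ⟪u₀' τ, φ τ⟫)
        = (∫ τ in (0:ℝ)..T, ⟪f₀ τ, φ τ⟫) - ∫ τ in (0:ℝ)..T, ⟪A (u₀ τ), φ τ⟫ :=
      tendsto_nhds_unique hlim2 hlim1
    have hsplit : (∫ τ in (0:ℝ)..T, ⟪u₀' τ + A (u₀ τ) - f₀ τ, φ τ⟫)
        = (∫ τ in (0:ℝ)..T, ⟪u₀' τ, φ τ⟫) + (∫ τ in (0:ℝ)..T, ⟪A (u₀ τ), φ τ⟫)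
          - ∫ τ in (0:ℝ)..T, ⟪f₀ τ, φ τ⟫ := by
      rw [← intervalIntegral.integral_add hu₀Int hAInt₀,
        ← intervalIntegral.integral_sub (hu₀Int.add hAInt₀) hf₀Int]
      apply intervalIntegral.integral_congr
      intro τ hτ
      show ⟪u₀' τ + A (u₀ τ) - f₀ τ, φ τ⟫ = (⟪u₀' τ, φ τ⟫ + ⟪A (u₀ τ), φ τ⟫) - ⟪f₀ τ, φ τ⟫
      rw [inner_sub_left, inner_add_left]
    rw [hsplit, huniq]
    ring
  -- choose the test function to be the (clamped) defect itself
  intro t ht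
  set G : ℝ → H := fun τ => u₀' τ + A (u₀ τ) - f₀ τ with hGdef
  have hGcont : ContinuousOn G (Set.Icc 0 T) :=
    (hcont₀.add (hAcont.comp_continuousOn hucont₀)).sub hf₀cont
  set φ : ℝ → H := fun τ => G (proj τ) with hφdef
  have hφcont : Continuous φ := hGcont.comp_continuous hproj_cont hproj_mem
  have hφeq : ∀ τ ∈ Set.Icc (0:ℝ) T, φ τ = G τ := by
    intro τ hτ
    rw [hφdef]
    simp only [hproj_id τ hτ]
  have hzero : (∫ τ in (0:ℝ)..T, ‖φ τ‖^2) = 0 := by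
    calc (∫ τ in (0:ℝ)..T, ‖φ τ‖^2)
        = ∫ τ in (0:ℝ)..T, ⟪u₀' τ + A (u₀ τ) - f₀ τ, φ τ⟫ := by
          apply intervalIntegral.integral_congr
          intro τ hτ
          rw [huIcc] at hτ
          show ‖φ τ‖^2 = ⟪u₀' τ + A (u₀ τ) - f₀ τ, φ τ⟫
          rw [← real_inner_self_eq_norm_sq]
          have h5 : u₀' τ + A (u₀ τ) - f₀ τ = G τ := rfl
          rw [h5, ← hφeq τ hτ]
      _ = 0 := hid φ hφcont
  have hae : (fun τ => ‖φ τ‖^2) =ᵐ[volume.restrict (Set.Ioc (0:ℝ) T)] 0 := by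
    rw [← intervalIntegral.integral_eq_zero_iff_of_le_of_nonneg_ae hT.le
      (Filter.Eventually.of_forall fun x => sq_nonneg _)
      ((hφcont.norm.pow 2).intervalIntegrable _ _)]
    exact hzero
  have haeIcc : (fun τ => ‖φ τ‖^2) =ᵐ[volume.restrict (Set.Icc (0:ℝ) T)] 0 := by
    rwa [Measure.restrict_congr_set Ioc_ae_eq_Icc] at hae
  have heqon : Set.EqOn (fun τ => ‖φ τ‖^2) 0 (Set.Icc (0:ℝ) T) :=
    MeasureTheory.Measure.eqOn_Icc_of_ae_eq (μ := volume) hT.ne haeIcc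
      ((hφcont.norm.pow 2)).continuousOn continuousOn_const
  have hφt : φ t = 0 := by
    have h2 : ‖φ t‖^2 = 0 := heqon ht
    have h4 : ‖φ t‖ = 0 := pow_eq_zero_iff two_ne_zero |>.mp h2
    exact norm_eq_zero.mp h4
  have hGt : G t = 0 := by rw [← hφeq t ht]; exact hφt
  have := hGt
  rw [hGdef] at this
  have h3 : u₀' t + A (u₀ t) - f₀ t = 0 := this
  rw [sub_eq_zero] at h3
  exact h3
end
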